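/- arXiv:quant-ph/0509196 — 3 statements merged into one kernel-verified Lean document; each statement's English description precedes it below -/
import Mathlib

section
/- Let G be unitary, S Hermitian involutive unitary, X = S G† S G. If u is a unit eigenvector of X with complex eigenvalue α and S·u is orthogonal to u, then for u₊ = (u + S u)/‖u + S u‖ and u₋ = (u − S u)/‖u − S u‖ we have X u₊ = Re(α) u₊ + i Im(α) u₋ and X u₋ = i Im(α) u₊ + Re(α) u₋, together with S u₊ = u₊ and S u₋ = −u₋. -/
open Matrix

/-- The Euclidean (ℓ²) norm of a vector in `ℂ^N`. -/
noncomputable def euclNorm {N : ℕ} (v : Fin N → ℂ) : ℝ :=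
  ‖(WithLp.equiv 2 (Fin N → ℂ)).symm v‖

/-- The Euclidean inner product `⟨v, w⟩ = Σ conj(v i) * w i` on `ℂ^N`. -/
noncomputable def einner {N : ℕ} (v w : Fin N → ℂ) : ℂ :=
  inner ℂ ((WithLp.equiv 2 (Fin N → ℂ)).symm v) ((WithLp.equiv 2 (Fin N → ℂ)).symm w)

lemma einner_eq {N : ℕ} (v w : Fin N → ℂ) : einner v w = star v ⬝ᵥ w :=
  by rw [dotProduct_comm]; exact EuclideanSpace.inner_toLp_toLp v w

lemma einner_mulVec {N : ℕ} (M : Matrix (Fin N) (Fin N) ℂ) (hM : Mᴴ * M = 1)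
    (v w : Fin N → ℂ) : einner (M *ᵥ v) (M *ᵥ w) = einner v w := by
  rw [einner_eq, einner_eq, star_mulVec, dotProduct_mulVec, vecMul_vecMul, hM, vecMul_one]

lemma enorm_sq {N : ℕ} (v : Fin N → ℂ) : (einner v v) = ((euclNorm v : ℂ))^2 := by
  simpa [einner, euclNorm] using inner_self_eq_norm_sq_to_K
    (𝕜 := ℂ) ((WithLp.equiv 2 (Fin N → ℂ)).symm v)

/-- Let `G` be unitary, `S` Hermitian involutive unitary, `X = S Gᴴ S G`.
If `u` is a unit eigenvector of `X` with eigenvalue `α` and `S u ⊥ u`, then for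
`u₊ = (u + S u)/‖u + S u‖` and `u₋ = (u − S u)/‖u − S u‖` one has
`X u₊ = Re(α) u₊ + i Im(α) u₋`, `X u₋ = i Im(α) u₊ + Re(α) u₋`,
`S u₊ = u₊` and `S u₋ = −u₋`. -/
theorem stmt_3 (N : ℕ) (G S : Matrix (Fin N) (Fin N) ℂ)
    (hGu : G * Gᴴ = 1) (hGu' : Gᴴ * G = 1)
    (hSh : Sᴴ = S) (hS2 : S * S = 1)
    (u : Fin N → ℂ) (α : ℂ)
    (hu : euclNorm u = 1)
    (heig : (S * Gᴴ * S * G) *ᵥ u = α • u)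
    (horth : einner (S *ᵥ u) u = 0)
    (up um : Fin N → ℂ)
    (hup : up = ((euclNorm (u + S *ᵥ u) : ℂ))⁻¹ • (u + S *ᵥ u))
    (hum : um = ((euclNorm (u - S *ᵥ u) : ℂ))⁻¹ • (u - S *ᵥ u)) :
    (S * Gᴴ * S * G) *ᵥ up = (α.re : ℂ) • up + (Complex.I * (α.im : ℂ)) • um ∧
    (S * Gᴴ * S * G) *ᵥ um = (Complex.I * (α.im : ℂ)) • up + (α.re : ℂ) • um ∧
    S *ᵥ up = up ∧
    S *ᵥ um = -um := by
  -- conjugate transpose of X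
  have hXadj : (S * Gᴴ * S * G)ᴴ = Gᴴ * S * G * S := by
    simp [conjTranspose_mul, hSh, Matrix.mul_assoc]
  -- X is unitary
  have hXX : (S * Gᴴ * S * G)ᴴ * (S * Gᴴ * S * G) = 1 := by
    rw [hXadj]
    simp only [Matrix.mul_assoc]
    rw [← Matrix.mul_assoc S S (Gᴴ * (S * G)), hS2, Matrix.one_mul,
      ← Matrix.mul_assoc G Gᴴ (S * G), hGu, Matrix.one_mul,
      ← Matrix.mul_assoc S S G, hS2, Matrix.one_mul, hGu']
  -- X S = S Xᴴ
  have hXS : (S * Gᴴ * S * G) * S = S * (S * Gᴴ * S * G)ᴴ := by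
    rw [hXadj]; simp only [Matrix.mul_assoc]
  -- S is unitary
  have hSS : Sᴴ * S = 1 := by rw [hSh]; exact hS2
  -- basic inner products
  have huu : einner u u = 1 := by rw [enorm_sq, hu]; norm_num
  have hSuSu : einner (S *ᵥ u) (S *ᵥ u) = 1 := by rw [einner_mulVec S hSS, huu]
  have huSu : einner u (S *ᵥ u) = 0 := by
    have h := inner_conj_symm (𝕜 := ℂ) ((WithLp.equiv 2 (Fin N → ℂ)).symm (S *ᵥ u))
      ((WithLp.equiv 2 (Fin N → ℂ)).symm u)
    have : einner u (S *ᵥ u) = (starRingEnd ℂ) (einner (S *ᵥ u) u) := by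
      rw [einner, einner, ← h, Complex.conj_conj]
    rw [this, horth, map_zero]
  -- norms of u ± S u
  have hplus2 : einner (u + S *ᵥ u) (u + S *ᵥ u) = 2 := by
    have : einner (u + S *ᵥ u) (u + S *ᵥ u)
        = einner u u + einner u (S *ᵥ u) + (einner (S *ᵥ u) u + einner (S *ᵥ u) (S *ᵥ u)) := by
      simp [einner_eq, star_add, add_dotProduct, dotProduct_add]; ring
    rw [this, huu, huSu, horth, hSuSu]; ring
  have hminus2 : einner (u - S *ᵥ u) (u - S *ᵥ u) = 2 := by
    have : einner (u - S *ᵥ u) (u - S *ᵥ u)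
        = einner u u - einner u (S *ᵥ u) - (einner (S *ᵥ u) u - einner (S *ᵥ u) (S *ᵥ u)) := by
      simp [einner_eq, star_sub, sub_dotProduct, dotProduct_sub]; ring
    rw [this, huu, huSu, horth, hSuSu]; ring
  have hnorm : ∀ v : Fin N → ℂ, einner v v = 2 → euclNorm v = Real.sqrt 2 := by
    intro v hv
    have h2 : (euclNorm v) ^ 2 = 2 := by
      have := (enorm_sq v).symm.trans hv
      exact_mod_cast this
    rw [← h2, Real.sqrt_sq (by exact norm_nonneg _)]
  have hep : euclNorm (u + S *ᵥ u) = Real.sqrt 2 := hnorm _ hplus2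
  have hem : euclNorm (u - S *ᵥ u) = Real.sqrt 2 := hnorm _ hminus2
  have hc : euclNorm (u - S *ᵥ u) = euclNorm (u + S *ᵥ u) := by rw [hep, hem]
  -- |α| = 1
  have hcc : (starRingEnd ℂ) α * α = 1 := by
    have h1 : einner ((S * Gᴴ * S * G) *ᵥ u) ((S * Gᴴ * S * G) *ᵥ u) = 1 := by
      rw [einner_mulVec _ hXX, huu]
    rw [heig] at h1
    have h2 : einner (α • u) (α • u) = (starRingEnd ℂ) α * α * einner u u := by
      simp [einner_eq, smul_dotProduct, dotProduct_smul, smul_eq_mul]; ring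
    rw [h2, huu, mul_one] at h1
    exact h1
  -- Xᴴ u = conj α • u
  have hXadju : (S * Gᴴ * S * G)ᴴ *ᵥ u = (starRingEnd ℂ) α • u := by
    have h1 : (S * Gᴴ * S * G)ᴴ *ᵥ ((S * Gᴴ * S * G) *ᵥ u) = u := by
      rw [mulVec_mulVec, hXX, one_mulVec]
    rw [heig, mulVec_smul] at h1
    calc (S * Gᴴ * S * G)ᴴ *ᵥ u
        = ((starRingEnd ℂ) α * α) • (S * Gᴴ * S * G)ᴴ *ᵥ u := by rw [hcc, one_smul]
      _ = (starRingEnd ℂ) α • (α • (S * Gᴴ * S * G)ᴴ *ᵥ u) := by rw [mul_smul]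
      _ = (starRingEnd ℂ) α • u := by rw [h1]
  -- X (S u) = conj α • (S u)
  have hXSu : (S * Gᴴ * S * G) *ᵥ (S *ᵥ u) = (starRingEnd ℂ) α • (S *ᵥ u) := by
    rw [mulVec_mulVec, hXS, ← mulVec_mulVec, hXadju, mulVec_smul]
  have hSSu : S *ᵥ (S *ᵥ u) = u := by rw [mulVec_mulVec, hS2, one_mulVec]
  set a : ℂ := (α.re : ℂ) with ha
  set b : ℂ := (α.im : ℂ) with hb
  have hconj : (starRingEnd ℂ) α = a - b * Complex.I := by
    rw [ha, hb]; apply Complex.ext <;> simp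
  have hri : α = a + b * Complex.I := by rw [ha, hb, Complex.re_add_im]
  refine ⟨?_, ?_, ?_, ?_⟩
  · rw [hup, hum, hc, mulVec_smul, mulVec_add, heig, hXSu, hconj, hri]
    match_scalars <;> ring
  · rw [hup, hum, hc, mulVec_smul, mulVec_sub, heig, hXSu, hconj, hri]
    match_scalars <;> ring
  · rw [hup, mulVec_smul, mulVec_add, hSSu, add_comm]
  · rw [hum, mulVec_smul, mulVec_sub, hSSu]
    module
end

section
/- Let G ∈ SU(2^n), S = σ_{nz}, X = S G† S G, and X' = S G S G†. The dimension of ker(X − I) ∩ ker(S − I) equals the dimension of ker(X' − I) ∩ ker(S − I), and the dimension of ker(X + I) ∩ ker(S − I) equals the dimension of ker(X' + I) ∩ ker(S + I); both correspondences are realized by the isomorphism u ↦ G u. -/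
open Matrix

lemma mem_eigSp_iff {N : ℕ} (A : Matrix (Fin N) (Fin N) ℂ) (c : ℂ) (u : Fin N → ℂ) :
    u ∈ LinearMap.ker (A.mulVecLin - c • LinearMap.id) ↔ A *ᵥ u = c • u := by
  simp [LinearMap.mem_ker, sub_eq_zero, Matrix.mulVecLin]

lemma fwd {N : ℕ} (S G : Matrix (Fin N) (Fin N) ℂ) (hS : S * S = 1)
    (hGu : G * Gᴴ = 1) (hGu' : Gᴴ * G = 1) (ε ε' : ℂ) (hε' : ε' * ε' = 1)
    (u : Fin N → ℂ)
    (hX : (S * Gᴴ * S * G) *ᵥ u = ε • u) (hSu : S *ᵥ u = ε' • u) :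
    (S * G * S * Gᴴ) *ᵥ (G *ᵥ u) = ε • (G *ᵥ u) ∧
      S *ᵥ (G *ᵥ u) = (ε * ε') • (G *ᵥ u) := by
  have hSx : ∀ x : Matrix (Fin N) (Fin N) ℂ, S * (S * x) = x := fun x => by
    rw [← Matrix.mul_assoc, hS, Matrix.one_mul]
  have hGx : ∀ x : Matrix (Fin N) (Fin N) ℂ, G * (Gᴴ * x) = x := fun x => by
    rw [← Matrix.mul_assoc, hGu, Matrix.one_mul]
  have h1 : S *ᵥ (G *ᵥ u) = (ε * ε') • (G *ᵥ u) := by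
    have h := congrArg (fun v => (G * S) *ᵥ v) hX
    simp only [Matrix.mulVec_mulVec, Matrix.mulVec_smul] at h
    rw [show G * S * (S * Gᴴ * S * G) = S * G by
      simp only [Matrix.mul_assoc]; rw [hSx, hGx]] at h
    rw [show (S * G) = S * G from rfl] at h
    rw [← Matrix.mulVec_mulVec] at h
    rw [h, ← Matrix.mulVec_mulVec, hSu, Matrix.mulVec_smul, smul_smul]
  refine ⟨?_, h1⟩
  have h2 : (S * G * S * Gᴴ) * G = S * (G * S) := by
    simp only [Matrix.mul_assoc]
    rw [show Gᴴ * G = 1 from hGu', Matrix.mul_one]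
  calc (S * G * S * Gᴴ) *ᵥ (G *ᵥ u) = ((S * G * S * Gᴴ) * G) *ᵥ u := by
        rw [Matrix.mulVec_mulVec]
    _ = S *ᵥ (G *ᵥ (S *ᵥ u)) := by rw [h2]; simp [Matrix.mulVec_mulVec, Matrix.mul_assoc]
    _ = ε' • (S *ᵥ (G *ᵥ u)) := by rw [hSu, Matrix.mulVec_smul, Matrix.mulVec_smul]
    _ = ε • (G *ᵥ u) := by rw [h1, smul_smul, show ε' * (ε * ε') = ε' * ε' * ε by ring, hε', one_mul]

/-- `σ_{nz} = I^{⊗(n-1)} ⊗ σ_z` on `n` qubits (qubit `n` = least significant bit). -/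
noncomputable def sigmaNZ (n : ℕ) : Matrix (Fin (2 ^ n)) (Fin (2 ^ n)) ℂ :=
  Matrix.diagonal fun i => if i.val % 2 = 0 then 1 else -1

/-- The eigenspace `ker (A - c • id)` of a matrix `A` for the eigenvalue `c`. -/
noncomputable def eigSp {N : ℕ} (A : Matrix (Fin N) (Fin N) ℂ) (c : ℂ) :
    Submodule ℂ (Fin N → ℂ) :=
  LinearMap.ker (A.mulVecLin - c • LinearMap.id)

lemma sigmaNZ_sq (n : ℕ) : sigmaNZ n * sigmaNZ n = 1 := by
  rw [sigmaNZ, Matrix.diagonal_mul_diagonal]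
  have : (fun i : Fin (2 ^ n) => (if i.val % 2 = 0 then (1:ℂ) else -1) * (if i.val % 2 = 0 then 1 else -1)) = fun _ => 1 := by
    funext i; by_cases h : i.val % 2 = 0 <;> simp [h]
  rw [this, Matrix.diagonal_one]

lemma mem_eigSp {N : ℕ} (A : Matrix (Fin N) (Fin N) ℂ) (c : ℂ) (u : Fin N → ℂ) :
    u ∈ eigSp A c ↔ A *ᵥ u = c • u := mem_eigSp_iff A c u

/-- Let `G ∈ SU(2^n)`, `S = σ_{nz}`, `X = S Gᴴ S G`, `X' = S G S Gᴴ`.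
The map `u ↦ G u` carries `ker(X−I) ∩ ker(S−I)` into `ker(X'−I) ∩ ker(S−I)` and
`ker(X+I) ∩ ker(S−I)` into `ker(X'+I) ∩ ker(S+I)`, and the corresponding
dimensions are equal. -/
theorem stmt_18 (n : ℕ) (G : Matrix (Fin (2 ^ n)) (Fin (2 ^ n)) ℂ)
    (hGu : G * Gᴴ = 1) (hGu' : Gᴴ * G = 1) (hGdet : G.det = 1) :
    (∀ u, u ∈ eigSp (sigmaNZ n * Gᴴ * sigmaNZ n * G) 1 ⊓ eigSp (sigmaNZ n) 1 →
        G *ᵥ u ∈ eigSp (sigmaNZ n * G * sigmaNZ n * Gᴴ) 1 ⊓ eigSp (sigmaNZ n) 1) ∧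
    (∀ u, u ∈ eigSp (sigmaNZ n * Gᴴ * sigmaNZ n * G) (-1) ⊓ eigSp (sigmaNZ n) 1 →
        G *ᵥ u ∈ eigSp (sigmaNZ n * G * sigmaNZ n * Gᴴ) (-1) ⊓ eigSp (sigmaNZ n) (-1)) ∧
    Module.finrank ℂ
        (eigSp (sigmaNZ n * Gᴴ * sigmaNZ n * G) 1 ⊓ eigSp (sigmaNZ n) 1 : Submodule ℂ _)
      = Module.finrank ℂ
        (eigSp (sigmaNZ n * G * sigmaNZ n * Gᴴ) 1 ⊓ eigSp (sigmaNZ n) 1 : Submodule ℂ _) ∧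
    Module.finrank ℂ
        (eigSp (sigmaNZ n * Gᴴ * sigmaNZ n * G) (-1) ⊓ eigSp (sigmaNZ n) 1 : Submodule ℂ _)
      = Module.finrank ℂ
        (eigSp (sigmaNZ n * G * sigmaNZ n * Gᴴ) (-1) ⊓ eigSp (sigmaNZ n) (-1) : Submodule ℂ _) := by
  set S := sigmaNZ n with hSdef
  have hS : S * S = 1 := sigmaNZ_sq n
  -- forward maps
  have F1 : ∀ u, u ∈ eigSp (S * Gᴴ * S * G) 1 ⊓ eigSp S 1 →
      G *ᵥ u ∈ eigSp (S * G * S * Gᴴ) 1 ⊓ eigSp S 1 := by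
    intro u hu
    obtain ⟨h1, h2⟩ := Submodule.mem_inf.mp hu
    rw [mem_eigSp] at h1 h2
    have := fwd S G hS hGu hGu' 1 1 (by norm_num) u h1 h2
    exact ⟨(mem_eigSp _ _ _).2 this.1, (mem_eigSp _ _ _).2 (by simpa using this.2)⟩
  have F2 : ∀ u, u ∈ eigSp (S * Gᴴ * S * G) (-1) ⊓ eigSp S 1 →
      G *ᵥ u ∈ eigSp (S * G * S * Gᴴ) (-1) ⊓ eigSp S (-1) := by
    intro u hu
    obtain ⟨h1, h2⟩ := Submodule.mem_inf.mp hu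
    rw [mem_eigSp] at h1 h2
    have := fwd S G hS hGu hGu' (-1) 1 (by norm_num) u h1 h2
    exact ⟨(mem_eigSp _ _ _).2 this.1, (mem_eigSp _ _ _).2 (by simpa using this.2)⟩
  -- backward maps via Gᴴ
  have B1 : ∀ v, v ∈ eigSp (S * G * S * Gᴴ) 1 ⊓ eigSp S 1 →
      Gᴴ *ᵥ v ∈ eigSp (S * Gᴴ * S * G) 1 ⊓ eigSp S 1 := by
    intro v hv
    obtain ⟨h1, h2⟩ := Submodule.mem_inf.mp hv
    rw [mem_eigSp] at h1 h2
    have := fwd S Gᴴ hS (by simpa using hGu') (by simpa using hGu) 1 1 (by norm_num) v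
      (by simpa using h1) h2
    exact ⟨(mem_eigSp _ _ _).2 (by simpa using this.1), (mem_eigSp _ _ _).2 (by simpa using this.2)⟩
  have B2 : ∀ v, v ∈ eigSp (S * G * S * Gᴴ) (-1) ⊓ eigSp S (-1) →
      Gᴴ *ᵥ v ∈ eigSp (S * Gᴴ * S * G) (-1) ⊓ eigSp S 1 := by
    intro v hv
    obtain ⟨h1, h2⟩ := Submodule.mem_inf.mp hv
    rw [mem_eigSp] at h1 h2
    have := fwd S Gᴴ hS (by simpa using hGu') (by simpa using hGu) (-1) (-1) (by norm_num) v
      (by simpa using h1) h2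
    refine ⟨(mem_eigSp _ _ _).2 (by simpa using this.1), (mem_eigSp _ _ _).2 ?_⟩
    simpa using this.2
  -- the linear equivalence u ↦ G u
  let e : (Fin (2 ^ n) → ℂ) ≃ₗ[ℂ] (Fin (2 ^ n) → ℂ) :=
    LinearEquiv.ofLinear G.mulVecLin Gᴴ.mulVecLin
      (by rw [← Matrix.mulVecLin_mul, hGu, Matrix.mulVecLin_one])
      (by rw [← Matrix.mulVecLin_mul, hGu', Matrix.mulVecLin_one])
  have he : ∀ u, e u = G *ᵥ u := fun u => rfl
  have he' : ∀ u, e.symm u = Gᴴ *ᵥ u := fun u => rfl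
  have hmap1 : (eigSp (S * Gᴴ * S * G) 1 ⊓ eigSp S 1).map (e : (Fin (2 ^ n) → ℂ) →ₗ[ℂ] _)
      = eigSp (S * G * S * Gᴴ) 1 ⊓ eigSp S 1 := by
    apply le_antisymm
    · rintro v ⟨u, hu, rfl⟩
      exact F1 u hu
    · intro v hv
      refine ⟨Gᴴ *ᵥ v, B1 v hv, ?_⟩
      show G *ᵥ (Gᴴ *ᵥ v) = v
      rw [Matrix.mulVec_mulVec, hGu, Matrix.one_mulVec]
  have hmap2 : (eigSp (S * Gᴴ * S * G) (-1) ⊓ eigSp S 1).map (e : (Fin (2 ^ n) → ℂ) →ₗ[ℂ] _)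
      = eigSp (S * G * S * Gᴴ) (-1) ⊓ eigSp S (-1) := by
    apply le_antisymm
    · rintro v ⟨u, hu, rfl⟩
      exact F2 u hu
    · intro v hv
      refine ⟨Gᴴ *ᵥ v, B2 v hv, ?_⟩
      show G *ᵥ (Gᴴ *ᵥ v) = v
      rw [Matrix.mulVec_mulVec, hGu, Matrix.one_mulVec]
  refine ⟨F1, F2, ?_, ?_⟩
  · rw [← hmap1]; exact (LinearEquiv.finrank_map_eq e _).symm
  · rw [← hmap2]; exact (LinearEquiv.finrank_map_eq e _).symm
end

section
/- Let N = 2^n with n ≥ 1, G unitary with det G = 1, S = σ_{nz}, X = S G† S G. Then the multiplicity of the eigenvalue 1 of X is even and the multiplicity of the eigenvalue −1 of X is even. -/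
open Matrix

section Aux
open Matrix Polynomial

variable {m : Type*} [Fintype m] [DecidableEq m] {R : Type*} [CommRing R]

lemma charpoly_conj_inv (S A : Matrix m m R) (hS : S * S = 1) :
    (S * A * S).charpoly = A.charpoly := by
  have hS' : S.map (C : R →+* R[X]) * S.map C = 1 := by
    rw [← Matrix.map_mul, hS, Matrix.map_one _ (map_zero C) (map_one C)]
  have hsc : (scalar m (X : R[X])) = (X : R[X]) • (1 : Matrix m m R[X]) := by
    rw [smul_one_eq_diagonal, scalar_apply]
  have hcm : charmatrix (S * A * S) = S.map C * charmatrix A * S.map C := by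
    simp only [charmatrix, RingHom.mapMatrix_apply, Matrix.map_mul]
    rw [mul_sub, sub_mul, hsc, mul_smul_comm, smul_mul_assoc, mul_one, hS']
  rw [Matrix.charpoly, hcm, det_mul, det_mul, mul_comm, ← mul_assoc, ← det_mul, hS', det_one,
    one_mul, Matrix.charpoly]

lemma charpoly_transpose' (A : Matrix m m R) : Aᵀ.charpoly = A.charpoly := by
  have : charmatrix Aᵀ = (charmatrix A)ᵀ := by
    simp [charmatrix, transpose_sub, transpose_map, transpose_smul, RingHom.mapMatrix_apply,
      diagonal_transpose, scalar_apply]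
  rw [Matrix.charpoly, this, det_transpose, Matrix.charpoly]
open Matrix Polynomial

variable {m : Type*} [Fintype m] [DecidableEq m] {F : Type*} [Field F]

lemma root_mem_spectrum (A : Matrix m m F) (μ : F) (h : A.charpoly.IsRoot μ) :
    μ ∈ spectrum F A := by
  rw [spectrum.mem_iff]
  have hev : eval μ A.charpoly = (scalar m μ - A).det := by
    rw [Matrix.charpoly, eval_det, matPolyEquiv_charmatrix]
    simp
  intro hu
  rw [Matrix.isUnit_iff_isUnit_det, isUnit_iff_ne_zero] at hu
  apply hu
  have : algebraMap F (Matrix m m F) μ = scalar m μ := rfl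
  rw [this, ← hev, h]

open scoped Matrix.Norms.L2Operator in
lemma abs_root_eq_one (A : Matrix m m ℂ) (hA : Aᴴ * A = 1) (hA' : A * Aᴴ = 1)
    (μ : ℂ) (hμ : μ ∈ A.charpoly.roots) : ‖μ‖ = 1 := by
  have hroot : A.charpoly.IsRoot μ := (mem_roots (A.charpoly_monic.ne_zero)).1 hμ
  have hsp := root_mem_spectrum A μ hroot
  have hU : A ∈ unitary (Matrix m m ℂ) := ⟨hA, hA'⟩
  have := spectrum.subset_circle_of_unitary (𝕜 := ℂ) hU hsp
  simpa using this
open Multiset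

lemma pm_one_facts (s : Multiset ℂ) (h : ∀ x ∈ s, x = 1 ∨ x = -1) :
    s.prod = (-1) ^ (s.count (-1)) ∧ Multiset.card s = s.count 1 + s.count (-1) := by
  induction s using Multiset.induction_on with
  | empty => simp
  | cons a s ih =>
    have ha := h a (mem_cons_self a s)
    obtain ⟨hp, hc⟩ := ih (fun x hx => h x (mem_cons_of_mem hx))
    have h1 : (1 : ℂ) ≠ -1 := by norm_num
    rcases ha with rfl | rfl <;>
      simp [count_cons, hp, hc, h1, h1.symm, pow_succ, mul_comm] <;> omega

lemma key_multiset (R : Multiset ℂ) (hconj : R.map (starRingEnd ℂ) = R) (hprod : R.prod = 1)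
    (hcard : Even (Multiset.card R)) (habs : ∀ μ ∈ R, ‖μ‖ = 1) :
    Even (R.count 1) ∧ Even (R.count (-1)) := by
  classical
  set c := starRingEnd ℂ
  set Z := R.filter (fun μ => μ.im = 0) with hZ
  set P := R.filter (fun μ => 0 < μ.im) with hP
  set Nn := R.filter (fun μ => μ.im < 0) with hN
  have hsplit : Z + (P + Nn) = R := by
    have h1 : P + Nn = R.filter (fun μ => ¬ μ.im = 0) := by
      rw [hP, hN, Multiset.filter_add_filter]
      have e1 : R.filter (fun μ => 0 < μ.im ∨ μ.im < 0) = R.filter (fun μ => ¬ μ.im = 0) := by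
        apply Multiset.filter_congr
        intro x _
        constructor
        · rintro (h | h) <;> intro hc <;> simp [hc] at h
        · intro h
          rcases lt_or_gt_of_ne (fun hc => h hc.symm) with h' | h'
          · exact Or.inl h'
          · exact Or.inr h'
      have e2 : R.filter (fun μ => 0 < μ.im ∧ μ.im < 0) = 0 := by
        rw [Multiset.filter_eq_nil]
        intro x _ ⟨h1, h2⟩
        exact absurd (h1.trans h2) (lt_irrefl _)
      rw [e1, e2, add_zero]
    rw [h1, hZ, Multiset.filter_add_not]
  have hNn : Nn = P.map c := by
    conv_lhs => rw [hN, ← hconj]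
    rw [Multiset.filter_map]
    congr 1
    apply Multiset.filter_congr
    intro x _
    simp only [Function.comp_apply, c, Complex.conj_im]
    constructor
    · intro h; linarith
    · intro h; linarith
  have hZpm : ∀ x ∈ Z, x = 1 ∨ x = -1 := by
    intro x hx
    rw [hZ] at hx
    have him := Multiset.of_mem_filter hx
    have habs1 : ‖x‖ = 1 := habs x (Multiset.mem_of_mem_filter hx)
    have hns : Complex.normSq x = 1 := by
      have := Complex.sq_norm x
      rw [habs1] at this; simpa using this.symm
    have hre : x.re * x.re = 1 := by
      rw [Complex.normSq_apply, him] at hns; linarith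
    rcases mul_self_eq_one_iff.1 hre with h | h
    · left; exact Complex.ext (by simp [h]) (by simp [him])
    · right; exact Complex.ext (by simp [h]) (by simp [him])
  obtain ⟨hZprod, hZcard⟩ := pm_one_facts Z hZpm
  have hprodeq : Z.prod * (P.prod * Nn.prod) = 1 := by
    rw [← hprod, ← hsplit, Multiset.prod_add, Multiset.prod_add]
  have hNnprod : Nn.prod = c P.prod := by
    rw [hNn, ← map_multiset_prod]
  have hmc : P.prod * c P.prod = (Complex.normSq P.prod : ℂ) := Complex.mul_conj P.prod
  set b := Z.count (-1 : ℂ) with hb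
  have heq : (-1 : ℂ) ^ b * (Complex.normSq P.prod : ℂ) = 1 := by
    rw [← hZprod, ← hmc, ← hNnprod]
    exact hprodeq
  have hbeven : Even b := by
    by_contra hodd
    rw [Nat.not_even_iff_odd] at hodd
    rw [hodd.neg_one_pow] at heq
    have h2 : (Complex.normSq P.prod : ℂ) = -1 := by linear_combination -heq
    have h3 : Complex.normSq P.prod = -1 := by exact_mod_cast h2
    linarith [Complex.normSq_nonneg P.prod]
  have hcnt1 : R.count 1 = Z.count 1 := by
    rw [hZ, Multiset.count_filter]; simp
  have hcntm : R.count (-1) = b := by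
    rw [hb, hZ, Multiset.count_filter]; simp
  have hcards : Multiset.card R = Multiset.card Z + 2 * Multiset.card P := by
    rw [← hsplit]
    simp [hNn]
    ring
  refine ⟨?_, by rwa [hcntm]⟩
  rw [hcnt1]
  rw [Nat.even_iff] at hcard hbeven ⊢
  omega

end Aux

/-- For `G ∈ SU(2^n)` (`n ≥ 1`) and `X = σ_{nz} Gᴴ σ_{nz} G`, the multiplicity
of the eigenvalue `1` of `X` is even, and the multiplicity of `-1` is even. -/
theorem stmt_19 (n : ℕ) (hn : 1 ≤ n) (G : Matrix (Fin (2 ^ n)) (Fin (2 ^ n)) ℂ)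
    (hGu : G * Gᴴ = 1) (hGu' : Gᴴ * G = 1) (hGdet : G.det = 1) :
    Even ((sigmaNZ n * Gᴴ * sigmaNZ n * G).charpoly.roots.count 1) ∧
    Even ((sigmaNZ n * Gᴴ * sigmaNZ n * G).charpoly.roots.count (-1)) := by
  set S := sigmaNZ n with hSdef
  set X := S * Gᴴ * S * G with hXdef
  have hone : (fun i : Fin (2 ^ n) => (if i.val % 2 = 0 then (1 : ℂ) else -1) *
      (if i.val % 2 = 0 then 1 else -1)) = fun _ => (1 : ℂ) := by
    funext i
    by_cases h : i.val % 2 = 0 <;> simp [h]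
  have hS2 : S * S = 1 := by
    rw [hSdef, sigmaNZ, diagonal_mul_diagonal, hone, diagonal_one]
  have hSH : Sᴴ = S := by
    have hstar : (star fun i : Fin (2 ^ n) => if i.val % 2 = 0 then (1 : ℂ) else -1) =
        fun i : Fin (2 ^ n) => if i.val % 2 = 0 then (1 : ℂ) else -1 := by
      funext i
      by_cases h : i.val % 2 = 0 <;> simp [Pi.star_apply, h]
    rw [hSdef, sigmaNZ, diagonal_conjTranspose, hstar]
  have hXH : Xᴴ = Gᴴ * S * G * S := by
    rw [hXdef]
    simp only [conjTranspose_mul, conjTranspose_conjTranspose, hSH]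
    noncomm_ring
  have hXuL : Xᴴ * X = 1 := by
    rw [hXH, hXdef]
    simp only [Matrix.mul_assoc]
    rw [← Matrix.mul_assoc S S, hS2, Matrix.one_mul,
      ← Matrix.mul_assoc G Gᴴ, hGu, Matrix.one_mul,
      ← Matrix.mul_assoc S S, hS2, Matrix.one_mul, hGu']
  have hXuR : X * Xᴴ = 1 := by
    rw [hXH, hXdef]
    simp only [Matrix.mul_assoc]
    rw [← Matrix.mul_assoc G Gᴴ, hGu, Matrix.one_mul,
      ← Matrix.mul_assoc S S, hS2, Matrix.one_mul,
      ← Matrix.mul_assoc Gᴴ G, hGu', Matrix.one_mul, hS2]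
  have hcpH : Xᴴ.charpoly = X.charpoly := by
    have h : Xᴴ = S * X * S := by
      rw [hXH, hXdef]
      calc Gᴴ * S * G * S = (S * S) * (Gᴴ * S * G * S) := by rw [hS2, Matrix.one_mul]
        _ = S * (S * Gᴴ * S * G) * S := by noncomm_ring
    rw [h, charpoly_conj_inv S X hS2]
  have hmapconj : X.charpoly.roots.map (starRingEnd ℂ) = X.charpoly.roots := by
    have h1 : Xᴴ.charpoly = (X.charpoly).map (starRingEnd ℂ) := by
      have h0 : Xᴴ = (X.map (starRingEnd ℂ))ᵀ := by
        ext i j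
        simp only [conjTranspose_apply, transpose_apply, Matrix.map_apply, starRingEnd_apply]
      rw [h0, charpoly_transpose', Matrix.charpoly_map]
    have h2 := congrArg Polynomial.roots (h1.symm.trans hcpH)
    rwa [Polynomial.Splits.roots_map (IsAlgClosed.splits X.charpoly)] at h2
  have hdS : S.det * S.det = 1 := by rw [← det_mul, hS2, det_one]
  have hdGH : Gᴴ.det = 1 := by rw [det_conjTranspose, hGdet, star_one]
  have hdetX : X.det = 1 := by
    rw [hXdef, det_mul, det_mul, det_mul, hdGH, hGdet]
    linear_combination hdS
  have hprod : X.charpoly.roots.prod = 1 := by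
    rw [← Matrix.det_eq_prod_roots_charpoly, hdetX]
  have hcard : Multiset.card X.charpoly.roots = 2 ^ n := by
    rw [(Polynomial.splits_iff_card_roots).1 (IsAlgClosed.splits X.charpoly),
      Matrix.charpoly_natDegree_eq_dim, Fintype.card_fin]
  have hcardeven : Even (Multiset.card X.charpoly.roots) := by
    rw [hcard]
    exact (Nat.even_pow).2 ⟨even_two, by omega⟩
  have habs : ∀ μ ∈ X.charpoly.roots, ‖μ‖ = 1 := fun μ hμ =>
    abs_root_eq_one X hXuL hXuR μ hμ
  exact key_multiset _ hmapconj hprod hcardeven habs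
end
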